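/- (Enhanced divisor exclusion) Let A ⊕ B = ℤ/Mℤ with M = ∏_{ι=1}^K p_ι^{n_ι}. Let m = ∏ p_ι^{α_ι} and m' = ∏ p_ι^{α'_ι} be divisors of M with at least one of m, m' different from M, and suppose for each ι either α_ι ≠ α'_ι or α_ι = α'_ι = n_ι. Then for all x, y ∈ ℤ/Mℤ there is no quadruple (a, a', b, b') ∈ A × A × B × B with gcd(a - x, M) = gcd(b - y, M) = m and gcd(a' - x, M) = gcd(b' - y, M) = m'. -/

import Mathlib

/-- `A ⊕ B = ℤ_M`: every element has a unique representation `a + b`, `a ∈ A`, `b ∈ B`. -/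
def IsTiling {M : ℕ} (A B : Finset (ZMod M)) : Prop :=
  ∀ z : ZMod M, ∃! ab : ZMod M × ZMod M, ab.1 ∈ A ∧ ab.2 ∈ B ∧ ab.1 + ab.2 = z


lemma tiling_card {M : ℕ} [NeZero M] {A B : Finset (ZMod M)} (hT : IsTiling A B) :
    A.card * B.card = M := by
  have h : (A ×ˢ B).card = (Finset.univ : Finset (ZMod M)).card := by
    apply Finset.card_bij (fun ab _ => ab.1 + ab.2)
    · intro a ha; exact Finset.mem_univ _
    · intro ab hab ab' hab' h
      rw [Finset.mem_product] at hab hab'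
      obtain ⟨c, -, hu⟩ := hT (ab.1 + ab.2)
      exact (hu ab ⟨hab.1, hab.2, rfl⟩).trans (hu ab' ⟨hab'.1, hab'.2, h.symm⟩).symm
    · intro z _
      obtain ⟨ab, ⟨h1, h2, h3⟩, -⟩ := hT z
      exact ⟨ab, Finset.mem_product.mpr ⟨h1, h2⟩, h3⟩
  rwa [Finset.card_product, Finset.card_univ, ZMod.card] at h

lemma dilation_prime {M : ℕ} [NeZero M] {p : ℕ} (hp : p.Prime) (hpM : ¬ p ∣ M)
    {A B : Finset (ZMod M)} (hT : IsTiling A B) :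
    IsTiling (A.image fun a => (p : ZMod M) * a) B := by
  classical
  haveI : Fact p.Prime := ⟨hp⟩
  -- the fiber counts
  set r : ZMod M → ℕ := fun z =>
    ((A ×ˢ B).filter fun ab => (p : ZMod M) * ab.1 + ab.2 = z).card with hr
  have hsum : ∑ z : ZMod M, r z = M := by
    rw [hr, ← Finset.card_eq_sum_card_fiberwise (fun ab _ => Finset.mem_univ _),
      Finset.card_product, tiling_card hT]
  have hpA : ¬ p ∣ A.card := fun h =>
    hpM (h.trans ⟨B.card, (tiling_card hT).symm⟩)
  have hmod : ∀ z : ZMod M, r z ≡ 1 [MOD p] := by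
    intro z
    -- the type of (p+ -tuples, b) summing to z
    set T := {vb : (ZMod p → ZMod M) × ZMod M //
      (∀ i, vb.1 i ∈ A) ∧ vb.2 ∈ B ∧ (∑ i, vb.1 i) + vb.2 = z} with hTdef
    letI : SMul (Multiplicative (ZMod p)) T :=
      ⟨fun g vb => ⟨⟨fun i => vb.1.1 (i + g.toAdd), vb.1.2⟩, by
        obtain ⟨⟨v, b⟩, h1, h2, h3⟩ := vb
        refine ⟨fun i => h1 _, h2, ?_⟩
        simpa [Fintype.sum_equiv (Equiv.addRight g.toAdd) (fun i => v (i + g.toAdd)) v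
          (fun i => rfl)] using h3⟩⟩
    letI : MulAction (Multiplicative (ZMod p)) T :=
      { one_smul := by
          intro vb
          apply Subtype.ext
          refine Prod.ext (funext fun i => ?_) rfl
          show vb.1.1 (i + (1 : Multiplicative (ZMod p)).toAdd) = _
          simp
        mul_smul := by
          intro g h vb
          apply Subtype.ext
          refine Prod.ext (funext fun i => ?_) rfl
          show vb.1.1 (i + (g * h).toAdd) = vb.1.1 (i + g.toAdd + h.toAdd)
          rw [toAdd_mul, ← add_assoc] }
    have hcardT : Nat.card T = A.card ^ (p - 1) := by
      have hbij : Function.Bijective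
          (fun (vb : T) (i : {i : ZMod p // i ≠ 0}) =>
            (⟨vb.1.1 i.1, vb.2.1 i.1⟩ : {a : ZMod M // a ∈ A})) := by
        constructor
        · rintro ⟨⟨v, b⟩, hvA, hbB, hsumz⟩ ⟨⟨v', b'⟩, hvA', hbB', hsumz'⟩ hΦ
          have hvv' : ∀ i : ZMod p, i ≠ 0 → v i = v' i := fun i hi =>
            congrArg Subtype.val (congrFun hΦ ⟨i, hi⟩)
          have hS : ∑ i ∈ Finset.univ.erase (0 : ZMod p), v i
              = ∑ i ∈ Finset.univ.erase (0 : ZMod p), v' i :=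
            Finset.sum_congr rfl fun i hi => hvv' i (Finset.mem_erase.mp hi).1
          rw [← Finset.add_sum_erase _ v (Finset.mem_univ 0)] at hsumz
          rw [← Finset.add_sum_erase _ v' (Finset.mem_univ 0)] at hsumz'
          obtain ⟨c, -, hu⟩ := hT (z - ∑ i ∈ Finset.univ.erase (0 : ZMod p), v i)
          have e1 : ((v 0, b) : ZMod M × ZMod M) = c :=
            hu (v 0, b) ⟨hvA 0, hbB, by rw [← hsumz]; ring⟩
          have e2 : ((v' 0, b') : ZMod M × ZMod M) = c :=
            hu (v' 0, b') ⟨hvA' 0, hbB', by rw [hS, ← hsumz']; ring⟩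
          have e := e1.trans e2.symm
          rw [Prod.mk.injEq] at e
          apply Subtype.ext
          rw [Prod.mk.injEq]
          refine ⟨funext fun i => ?_, e.2⟩
          by_cases hi : i = 0
          · subst hi; exact e.1
          · exact hvv' i hi
        · intro f
          obtain ⟨⟨a, b⟩, ⟨haA, hbB, hab⟩, -⟩ :=
            hT (z - ∑ i : {i : ZMod p // i ≠ 0}, (f i).1)
          have hsum0 : ∑ i : ZMod p, (if h : i = (0:ZMod p) then a else (f ⟨i, h⟩).1)
              = a + ∑ i : {i : ZMod p // i ≠ 0}, (f i).1 := by
            rw [← Finset.add_sum_erase _ _ (Finset.mem_univ (0 : ZMod p))]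
            congr 1
            · simp
            · rw [Finset.sum_subtype (p := fun i => i ≠ (0 : ZMod p)) (Finset.univ.erase 0)
                (fun x => by simp)
                (fun i => if h : i = (0:ZMod p) then a else (f ⟨i, h⟩).1)]
              exact Finset.sum_congr rfl fun i _ => dif_neg i.2
          refine ⟨⟨⟨fun i => if h : i = 0 then a else (f ⟨i, h⟩).1, b⟩, fun i => ?_, hbB, ?_⟩, ?_⟩
          · dsimp only
            split
            · exact haA
            · exact (f _).2
          · show (∑ i : ZMod p, (if h : i = (0:ZMod p) then a else (f ⟨i, h⟩).1)) + b = z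
            rw [hsum0]
            linear_combination hab
          · funext i
            apply Subtype.ext
            show (if h : i.1 = 0 then a else (f ⟨i.1, h⟩).1) = (f i).1
            rw [dif_neg i.2]
      rw [Nat.card_eq_of_bijective _ hbij, Nat.card_fun]
      have h1 : Nat.card {a : ZMod M // a ∈ A} = A.card := by
        rw [Nat.card_eq_fintype_card]
        exact Fintype.card_coe A
      have h2 : Nat.card {i : ZMod p // i ≠ 0} = p - 1 := by
        rw [Nat.card_eq_fintype_card, Fintype.card_subtype_compl, ZMod.card,
          Fintype.card_subtype_eq]
      rw [h1, h2]
    have hfix : Nat.card (MulAction.fixedPoints (Multiplicative (ZMod p)) T) = r z := by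
      have hmemF : ∀ x : ZMod M × ZMod M,
          x ∈ (A ×ˢ B).filter (fun ab => (p : ZMod M) * ab.1 + ab.2 = z) ↔
            (x.1 ∈ A ∧ x.2 ∈ B ∧ (p : ZMod M) * x.1 + x.2 = z) := by
        intro x
        rw [Finset.mem_filter, Finset.mem_product, and_assoc]
      have hΨ : Function.Bijective
          (fun (x : {ab : ZMod M × ZMod M //
              ab ∈ (A ×ˢ B).filter fun ab => (p : ZMod M) * ab.1 + ab.2 = z}) =>
          (⟨⟨⟨fun _ => x.1.1, x.1.2⟩, by
              obtain ⟨h1, h2, h3⟩ := (hmemF x.1).mp x.2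
              refine ⟨fun _ => h1, h2, ?_⟩
              rw [Finset.sum_const, Finset.card_univ, ZMod.card, nsmul_eq_mul]
              exact h3⟩, by
            rw [MulAction.mem_fixedPoints]
            intro g
            exact Subtype.ext rfl⟩ :
            MulAction.fixedPoints (Multiplicative (ZMod p)) T)) := by
        constructor
        · intro x y h
          have h1 : ((x.1.1, x.1.2) : ZMod M × ZMod M) = (y.1.1, y.1.2) :=
            congrArg (fun t => ((t.1.1.1 (0 : ZMod p), t.1.1.2) : ZMod M × ZMod M)) h
          exact Subtype.ext h1
        · intro y
          obtain ⟨⟨⟨v, b⟩, hvA, hbB, hsumz⟩, hyfix⟩ := y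
          rw [MulAction.mem_fixedPoints] at hyfix
          have hconst : ∀ i : ZMod p, v i = v 0 := by
            intro i
            have h2 : v (0 + i) = v 0 :=
              congrArg (fun t => (t : T).1.1 (0 : ZMod p)) (hyfix (Multiplicative.ofAdd i))
            simpa using h2
          have hmem : ((v 0, b) : ZMod M × ZMod M) ∈
              (A ×ˢ B).filter fun ab => (p : ZMod M) * ab.1 + ab.2 = z := by
            rw [hmemF]
            refine ⟨hvA 0, hbB, ?_⟩
            have hs : ∑ i : ZMod p, v i = (p : ZMod M) * v 0 := by
              rw [Finset.sum_congr rfl fun i _ => hconst i, Finset.sum_const,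
                Finset.card_univ, ZMod.card, nsmul_eq_mul]
            rw [← hs]
            exact hsumz
          refine ⟨⟨(v 0, b), hmem⟩, ?_⟩
          apply Subtype.ext
          apply Subtype.ext
          rw [Prod.mk.injEq]
          exact ⟨funext fun i => (hconst i).symm, rfl⟩
      rw [← Nat.card_eq_of_bijective _ hΨ, Nat.card_eq_finsetCard]
    have hPG : IsPGroup p (Multiplicative (ZMod p)) :=
      IsPGroup.of_card (by simp : Nat.card (Multiplicative (ZMod p)) = p ^ 1)
    have := hPG.card_modEq_card_fixedPoints T
    rw [hcardT, hfix] at this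
    have fermat : A.card ^ (p - 1) ≡ 1 [MOD p] := by
      rw [← ZMod.natCast_eq_natCast_iff]
      push_cast
      exact ZMod.pow_card_sub_one_eq_one (by
        simpa [ZMod.natCast_eq_zero_iff] using hpA)
    exact (this.symm.trans fermat)
  -- each fiber has exactly one element
  have hone : ∀ z : ZMod M,
      ((A ×ˢ B).filter fun ab => (p : ZMod M) * ab.1 + ab.2 = z).card = 1 := by
    have hge : ∀ z : ZMod M, 1 ≤ r z := by
      intro z
      rcases Nat.eq_zero_or_pos (r z) with h | h
      · exfalso
        have := hmod z
        rw [h] at this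
        have h1 : p ∣ 1 := by simpa using (Nat.modEq_iff_dvd' (Nat.zero_le 1)).mp this
        exact hp.one_lt.ne' (Nat.dvd_one.mp h1)
      · exact h
    intro z
    have h1 : ∑ _z : ZMod M, 1 = ∑ z : ZMod M, r z := by
      rw [hsum]; simp [ZMod.card]
    have := (Finset.sum_eq_sum_iff_of_le (fun i _ => hge i)).mp h1
    exact ((this z (Finset.mem_univ z)).symm : r z = 1)
  -- translate to the unique-representation statement
  intro z
  obtain ⟨ab, hab⟩ := Finset.card_eq_one.mp (hone z)
  have habmem : ab ∈ (A ×ˢ B).filter fun ab => (p : ZMod M) * ab.1 + ab.2 = z := by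
    rw [hab]; exact Finset.mem_singleton_self _
  rw [Finset.mem_filter, Finset.mem_product] at habmem
  obtain ⟨⟨hA1, hB1⟩, heq⟩ := habmem
  refine ⟨((p : ZMod M) * ab.1, ab.2), ⟨Finset.mem_image_of_mem _ hA1, hB1, heq⟩, ?_⟩
  rintro ⟨c1, c2⟩ ⟨hc1, hc2, hc3⟩
  obtain ⟨a1, ha1, rfl⟩ := Finset.mem_image.mp hc1
  have : (a1, c2) ∈ (A ×ˢ B).filter fun ab => (p : ZMod M) * ab.1 + ab.2 = z := by
    rw [Finset.mem_filter, Finset.mem_product]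
    exact ⟨⟨ha1, hc2⟩, hc3⟩
  rw [hab, Finset.mem_singleton] at this
  rw [← this]

lemma dilation_coprime {M : ℕ} [NeZero M] {A B : Finset (ZMod M)} (hT : IsTiling A B) :
    ∀ t : ℕ, t.Coprime M → IsTiling (A.image fun a => (t : ZMod M) * a) B := by
  intro t
  induction t using Nat.strong_induction_on with
  | _ t ih =>
    intro ht
    rcases eq_or_ne t 1 with rfl | ht1
    · simpa using hT
    rcases eq_or_ne t 0 with rfl | ht0
    · have hM1 : M = 1 := by simpa [Nat.coprime_zero_left] using ht
      subst hM1
      intro z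
      obtain ⟨⟨a, b⟩, ⟨ha, hb, -⟩, -⟩ := hT z
      exact ⟨((0 : ℕ) * a, b),
        ⟨Finset.mem_image_of_mem _ ha, hb, Subsingleton.elim _ _⟩,
        fun y _ => Subsingleton.elim _ _⟩
    · have hq : t.minFac.Prime := Nat.minFac_prime ht1
      have hqd : t.minFac ∣ t := Nat.minFac_dvd t
      have hlt : t / t.minFac < t :=
        Nat.div_lt_self (Nat.pos_of_ne_zero ht0) hq.one_lt
      have hcop : (t / t.minFac).Coprime M :=
        Nat.Coprime.coprime_dvd_left (Nat.div_dvd_of_dvd hqd) ht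
      have hqM : ¬ t.minFac ∣ M := by
        intro h
        have : t.minFac ∣ 1 := ht ▸ Nat.dvd_gcd hqd h
        exact hq.one_lt.ne' (Nat.dvd_one.mp this)
      have h1 := dilation_prime hq hqM (ih _ hlt hcop)
      rw [Finset.image_image] at h1
      have hfun : ((fun a => (t.minFac : ZMod M) * a) ∘
          fun a => ((t / t.minFac : ℕ) : ZMod M) * a) = fun a => (t : ZMod M) * a := by
        funext a
        show (t.minFac : ZMod M) * (((t / t.minFac : ℕ) : ZMod M) * a) = _
        rw [← mul_assoc, ← Nat.cast_mul, Nat.mul_div_cancel' hqd]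
      rwa [hfun] at h1

lemma divisor_exclusion {M : ℕ} [NeZero M] {A B : Finset (ZMod M)} (hT : IsTiling A B)
    {a a' b b' : ZMod M} (ha : a ∈ A) (ha' : a' ∈ A) (hb : b ∈ B) (hb' : b' ∈ B)
    (h : Nat.gcd (a - a').val M = Nat.gcd (b - b').val M) : a = a' ∧ b = b' := by
  set u := (a - a').val with hu_def
  set w := (b - b').val with hw_def
  set d := Nat.gcd u M with hd_def
  have hM0 : M ≠ 0 := NeZero.ne M
  have hd0 : 0 < d := Nat.gcd_pos_of_pos_right _ (Nat.pos_of_ne_zero hM0)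
  have hdM : d ∣ M := Nat.gcd_dvd_right u M
  have he : M / d ∣ M := Nat.div_dvd_of_dvd hdM
  set s := u / d with hs_def
  set s' := w / d with hs'_def
  have hs : s.Coprime (M / d) := Nat.coprime_div_gcd_div_gcd hd0
  have hs' : s'.Coprime (M / d) := by
    rw [hs'_def, h]
    exact Nat.coprime_div_gcd_div_gcd (h ▸ hd0)
  have hu : d * s = u := Nat.mul_div_cancel' (Nat.gcd_dvd_left u M)
  have hw : d * s' = w := by
    rw [hs'_def, h]
    exact Nat.mul_div_cancel' (Nat.gcd_dvd_left w M)
  -- find a dilation factor t coprime to M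
  obtain ⟨τ, hτ⟩ := ZMod.unitsMap_surjective he
    ((ZMod.unitOfCoprime s' hs') * (ZMod.unitOfCoprime s hs)⁻¹)
  set t := (τ : ZMod M).val with ht_def
  have ht : t.Coprime M := ZMod.val_coe_unit_coprime τ
  have htM : ((t : ZMod M)) = (τ : ZMod M) := by
    rw [ht_def, ZMod.natCast_val, ZMod.cast_id]
  -- t * s ≡ s' mod (M/d)
  have hts : t * s ≡ s' [MOD M / d] := by
    rw [← ZMod.natCast_eq_natCast_iff]
    push_cast
    have h1 : ((t : ZMod (M / d))) = ((ZMod.unitOfCoprime s' hs') *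
        (ZMod.unitOfCoprime s hs)⁻¹ : (ZMod (M / d))ˣ) := by
      have hc : (ZMod.castHom he (ZMod (M / d))) ((t : ZMod M)) = (t : ZMod (M / d)) :=
        map_natCast _ t
      rw [htM] at hc
      rw [← hc, ← hτ, ZMod.unitsMap_def]
      rfl
    rw [h1]
    rw [Units.val_mul]
    rw [mul_assoc]
    have h2 : (((ZMod.unitOfCoprime s hs)⁻¹ : (ZMod (M / d))ˣ) : ZMod (M / d)) * (s : ZMod (M / d))
        = 1 := by
      rw [← ZMod.coe_unitOfCoprime s hs, ← Units.val_mul, inv_mul_cancel, Units.val_one]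
    rw [h2, mul_one, ZMod.coe_unitOfCoprime]
  -- hence t * (a - a') = b - b'
  have hkey : (t : ZMod M) * (a - a') = b - b' := by
    have h3 : t * u ≡ w [MOD M] := by
      have h4 : d * (t * s) ≡ d * s' [MOD d * (M / d)] := hts.mul_left' (c := d)
      rw [Nat.mul_div_cancel' hdM] at h4
      rw [hw] at h4
      calc t * u = d * (t * s) := by rw [← hu]; ring
      _ ≡ w [MOD M] := h4
    have h5 : ((t * u : ℕ) : ZMod M) = ((w : ℕ) : ZMod M) :=
      (ZMod.natCast_eq_natCast_iff _ _ _).mpr h3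
    have h6 : ((u : ℕ) : ZMod M) = a - a' := by rw [hu_def, ZMod.natCast_val, ZMod.cast_id]
    have h7 : ((w : ℕ) : ZMod M) = b - b' := by rw [hw_def, ZMod.natCast_val, ZMod.cast_id]
    rw [← h6, ← h7]
    push_cast at h5 ⊢
    exact h5
  -- now use the dilated tiling
  have hTt := dilation_coprime hT t ht
  have hz : (t : ZMod M) * a + b' = (t : ZMod M) * a' + b := by
    linear_combination hkey
  obtain ⟨c, -, hun⟩ := hTt ((t : ZMod M) * a + b')
  have e1 := hun ((t : ZMod M) * a, b') ⟨Finset.mem_image_of_mem _ ha, hb', rfl⟩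
  have e2 := hun ((t : ZMod M) * a', b) ⟨Finset.mem_image_of_mem _ ha', hb, hz.symm⟩
  have e := e1.trans e2.symm
  rw [Prod.mk.injEq] at e
  have htu : IsUnit ((t : ZMod M)) := by
    rw [← ZMod.coe_unitOfCoprime t ht]
    exact (ZMod.unitOfCoprime t ht).isUnit
  constructor
  · exact htu.mul_left_cancel e.1
  · exact e.2.symm

lemma fact_prod_pow {K : ℕ} {p : Fin K → ℕ} (hp : ∀ ι, (p ι).Prime)
    (hdist : Function.Injective p) (β : Fin K → ℕ) (j : Fin K) :
    (∏ ι, p ι ^ β ι).factorization (p j) = β j := by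
  rw [Nat.factorization_prod (fun i _ => pow_ne_zero _ (hp i).pos.ne')]
  rw [Finsupp.finset_sum_apply]
  rw [Finset.sum_eq_single j]
  · rw [(hp j).factorization_pow, Finsupp.single_eq_same]
  · intro i _ hij
    rw [(hp i).factorization_pow, Finsupp.single_eq_of_ne' (fun e => hij (hdist e))]
  · intro h
    exact absurd (Finset.mem_univ j) h

lemma prod_pow_dvd {K : ℕ} {p : Fin K → ℕ} (hp : ∀ ι, (p ι).Prime)
    (hdist : Function.Injective p) (γ : Fin K → ℕ) {N : ℕ}
    (h : ∀ ι, p ι ^ γ ι ∣ N) : (∏ ι, p ι ^ γ ι) ∣ N := by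
  classical
  have key : ∀ s : Finset (Fin K), (∏ ι ∈ s, p ι ^ γ ι) ∣ N := by
    intro s
    induction s using Finset.induction_on with
    | empty => simpa using one_dvd N
    | @insert a s ha ih =>
      rw [Finset.prod_insert ha]
      refine Nat.Coprime.mul_dvd_of_dvd_of_dvd ?_ (h a) ih
      apply Nat.Coprime.prod_right
      intro i hi
      have hne : p a ≠ p i := fun e => ha (hdist e ▸ hi)
      exact Nat.Coprime.pow _ _ ((Nat.coprime_primes (hp a) (hp i)).mpr hne)
  exact key Finset.univ

lemma gcd_sub_eq {M K : ℕ} {p : Fin K → ℕ} (hp : ∀ ι, (p ι).Prime)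
    (hdist : Function.Injective p) {n : Fin K → ℕ}
    (hM : M = ∏ ι, p ι ^ n ι) [NeZero M]
    {α α' : Fin K → ℕ} (hα : ∀ ι, α ι ≤ n ι) (hα' : ∀ ι, α' ι ≤ n ι)
    (hcond : ∀ ι, α ι ≠ α' ι ∨ (α ι = n ι ∧ α' ι = n ι))
    {u u' : ZMod M} (hu : Nat.gcd u.val M = ∏ ι, p ι ^ α ι)
    (hu' : Nat.gcd u'.val M = ∏ ι, p ι ^ α' ι) :
    Nat.gcd (u - u').val M = ∏ ι, p ι ^ min (α ι) (α' ι) := by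
  have hM0 : M ≠ 0 := NeZero.ne M
  have hcastiff : ∀ (e : ℕ) (he : e ∣ M) (v : ZMod M),
      e ∣ v.val ↔ ZMod.castHom he (ZMod e) v = 0 := by
    intro e he v
    haveI : NeZero e := ⟨fun h0 => hM0 (by rw [h0] at he; exact zero_dvd_iff.mp he)⟩
    rw [← ZMod.natCast_eq_zero_iff, ZMod.natCast_val, ZMod.castHom_apply]
  have hsub : ∀ (e : ℕ) (he : e ∣ M) (v v' : ZMod M),
      e ∣ v.val → e ∣ v'.val → e ∣ (v - v').val := by
    intro e he v v' h1 h2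
    rw [hcastiff e he] at h1 h2 ⊢
    rw [map_sub, h1, h2, sub_self]
  have hadd : ∀ (e : ℕ) (he : e ∣ M) (v v' : ZMod M),
      e ∣ v.val → e ∣ v'.val → e ∣ (v + v').val := by
    intro e he v v' h1 h2
    rw [hcastiff e he] at h1 h2 ⊢
    rw [map_add, h1, h2, add_zero]
  have trans1 : ∀ (e : ℕ), e ∣ M → ∀ v : ZMod M, (e ∣ v.val ↔ e ∣ Nat.gcd v.val M) :=
    fun e heM v => ⟨fun h => Nat.dvd_gcd h heM, fun h => h.trans (Nat.gcd_dvd_left _ _)⟩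
  have hpnM : ∀ (ι : Fin K) (k : ℕ), k ≤ n ι → p ι ^ k ∣ M := by
    intro ι k hk
    rw [hM]
    exact (pow_dvd_pow _ hk).trans (Finset.dvd_prod_of_mem _ (Finset.mem_univ ι))
  have hdvd1 : ∀ ι, p ι ^ min (α ι) (α' ι) ∣ (u - u').val := by
    intro ι
    have hpM' : p ι ^ min (α ι) (α' ι) ∣ M :=
      hpnM ι _ (le_trans (min_le_left _ _) (hα ι))
    apply hsub _ hpM'
    · rw [trans1 _ hpM' u, hu]
      exact (pow_dvd_pow _ (min_le_left _ _)).trans (Finset.dvd_prod_of_mem _ (Finset.mem_univ ι))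
    · rw [trans1 _ hpM' u', hu']
      exact (pow_dvd_pow _ (min_le_right _ _)).trans (Finset.dvd_prod_of_mem _ (Finset.mem_univ ι))
  have hmmM : (∏ ι, p ι ^ min (α ι) (α' ι)) ∣ M := by
    rw [hM]
    exact Finset.prod_dvd_prod_of_dvd _ _
      (fun ι _ => pow_dvd_pow _ (le_trans (min_le_left _ _) (hα ι)))
  have hmmg : (∏ ι, p ι ^ min (α ι) (α' ι)) ∣ Nat.gcd (u - u').val M :=
    Nat.dvd_gcd (prod_pow_dvd hp hdist _ hdvd1) hmmM
  have hg0 : Nat.gcd (u - u').val M ≠ 0 :=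
    fun h0 => hM0 (Nat.eq_zero_of_gcd_eq_zero_right h0)
  have hmm0 : (∏ ι, p ι ^ min (α ι) (α' ι)) ≠ 0 :=
    (Finset.prod_pos (fun i _ => pow_pos (hp i).pos _)).ne'
  have hm0 : (∏ ι, p ι ^ α ι) ≠ 0 :=
    (Finset.prod_pos (fun i _ => pow_pos (hp i).pos _)).ne'
  have hm'0 : (∏ ι, p ι ^ α' ι) ≠ 0 :=
    (Finset.prod_pos (fun i _ => pow_pos (hp i).pos _)).ne'
  have hgM : Nat.gcd (u - u').val M ∣ M := Nat.gcd_dvd_right _ _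
  refine Nat.dvd_antisymm ?_ hmmg
  rw [← Nat.factorization_le_iff_dvd hg0 hmm0]
  rw [Finsupp.le_iff]
  intro q hq
  have hqprime : q.Prime := Nat.prime_of_mem_primeFactors (by
    rwa [← Nat.support_factorization])
  have hqg : q ∣ Nat.gcd (u - u').val M := Nat.dvd_of_mem_primeFactors (by
    rwa [← Nat.support_factorization])
  obtain ⟨ι, -, hqι⟩ := hqprime.prime.exists_mem_finset_dvd
    (show q ∣ ∏ ι, p ι ^ n ι from hM ▸ hqg.trans hgM)
  have hqp : q = p ι := (Nat.prime_dvd_prime_iff_eq hqprime (hp ι)).mp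
    (hqprime.dvd_of_dvd_pow hqι)
  subst hqp
  refine le_trans ?_ (fact_prod_pow hp hdist (fun ι => min (α ι) (α' ι)) ι).ge
  by_contra hlt
  push_neg at hlt
  have hdvdg : p ι ^ (min (α ι) (α' ι) + 1) ∣ Nat.gcd (u - u').val M :=
    (Nat.Prime.pow_dvd_iff_le_factorization (hp ι) hg0).mpr hlt
  have hkn : (Nat.gcd (u - u').val M).factorization (p ι) ≤ n ι := by
    have h1 : (Nat.gcd (u - u').val M).factorization ≤ M.factorization :=
      (Nat.factorization_le_iff_dvd hg0 hM0).mpr hgM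
    have h2 := h1 (p ι)
    have h3 : M.factorization (p ι) = n ι := by
      rw [hM]; exact fact_prod_pow hp hdist n ι
    exact le_trans h2 h3.le
  have hmin_lt : min (α ι) (α' ι) < n ι := lt_of_lt_of_le hlt hkn
  rcases hcond ι with hne | ⟨hαn, hα'n⟩
  · -- α ι ≠ α' ι
    rcases lt_or_gt_of_ne hne with hlt2 | hlt2
    · -- α ι < α' ι : min = α ι
      have hk : min (α ι) (α' ι) + 1 = α ι + 1 := by rw [min_eq_left hlt2.le]
      rw [hk] at hdvdg
      have hkn' : α ι + 1 ≤ n ι := hlt2.trans_le (hα' ι)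
      have hkM : p ι ^ (α ι + 1) ∣ M := hpnM ι _ hkn'
      have hduu : p ι ^ (α ι + 1) ∣ (u - u').val :=
        hdvdg.trans (Nat.gcd_dvd_left _ _)
      have hdu' : p ι ^ (α ι + 1) ∣ u'.val := by
        rw [trans1 _ hkM u', hu']
        exact (pow_dvd_pow _ hlt2).trans (Finset.dvd_prod_of_mem _ (Finset.mem_univ ι))
      have hdu : p ι ^ (α ι + 1) ∣ u.val := by
        have h4 := hadd _ hkM (u - u') u' hduu hdu'
        rwa [sub_add_cancel] at h4
      have : α ι + 1 ≤ α ι := by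
        have h3 : p ι ^ (α ι + 1) ∣ ∏ ι, p ι ^ α ι := by
          rw [← hu, ← trans1 _ hkM u]; exact hdu
        have := (Nat.Prime.pow_dvd_iff_le_factorization (hp ι) hm0).mp h3
        rwa [fact_prod_pow hp hdist] at this
      omega
    · -- α' ι < α ι
      have hk : min (α ι) (α' ι) + 1 = α' ι + 1 := by rw [min_eq_right hlt2.le]
      rw [hk] at hdvdg
      have hkn' : α' ι + 1 ≤ n ι := hlt2.trans_le (hα ι)
      have hkM : p ι ^ (α' ι + 1) ∣ M := hpnM ι _ hkn'
      have hduu : p ι ^ (α' ι + 1) ∣ (u - u').val :=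
        hdvdg.trans (Nat.gcd_dvd_left _ _)
      have hdu : p ι ^ (α' ι + 1) ∣ u.val := by
        rw [trans1 _ hkM u, hu]
        exact (pow_dvd_pow _ hlt2).trans (Finset.dvd_prod_of_mem _ (Finset.mem_univ ι))
      have hdu' : p ι ^ (α' ι + 1) ∣ u'.val := by
        have h4 := hsub _ hkM u (u - u') hdu hduu
        rwa [sub_sub_cancel] at h4
      have : α' ι + 1 ≤ α' ι := by
        have h3 : p ι ^ (α' ι + 1) ∣ ∏ ι, p ι ^ α' ι := by
          rw [← hu', ← trans1 _ hkM u']; exact hdu'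
        have := (Nat.Prime.pow_dvd_iff_le_factorization (hp ι) hm'0).mp h3
        rwa [fact_prod_pow hp hdist] at this
      omega
  · rw [hαn, hα'n, min_self] at hmin_lt
    exact lt_irrefl _ hmin_lt

theorem enhanced_divisor_exclusion (M K : ℕ)
    (p : Fin K → ℕ) (hp : ∀ ι, (p ι).Prime)
    (hdist : Function.Injective p)
    (n : Fin K → ℕ) (hn : ∀ ι, 1 ≤ n ι)
    (hM : M = ∏ ι, p ι ^ n ι)
    (A B : Finset (ZMod M)) (hT : IsTiling A B)
    (α α' : Fin K → ℕ) (hα : ∀ ι, α ι ≤ n ι) (hα' : ∀ ι, α' ι ≤ n ι)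
    (m m' : ℕ) (hm : m = ∏ ι, p ι ^ α ι) (hm' : m' = ∏ ι, p ι ^ α' ι)
    (hne : m ≠ M ∨ m' ≠ M)
    (hcond : ∀ ι, α ι ≠ α' ι ∨ (α ι = n ι ∧ α' ι = n ι)) :
    ∀ x y : ZMod M,
      ¬ ∃ a a' b b' : ZMod M, a ∈ A ∧ a' ∈ A ∧ b ∈ B ∧ b' ∈ B ∧
        Nat.gcd (a - x).val M = m ∧ Nat.gcd (b - y).val M = m ∧
        Nat.gcd (a' - x).val M = m' ∧ Nat.gcd (b' - y).val M = m' := by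
  intro x y
  rintro ⟨a, a', b, b', ha, ha', hb, hb', h1, h2, h3, h4⟩
  haveI : NeZero M := ⟨by
    rw [hM]
    exact (Finset.prod_pos (fun i _ => pow_pos (hp i).pos _)).ne'⟩
  rw [hm] at h1 h2
  rw [hm'] at h3 h4
  have e1 := gcd_sub_eq hp hdist hM hα hα' hcond h1 h3
  have e2 := gcd_sub_eq hp hdist hM hα hα' hcond h2 h4
  rw [sub_sub_sub_cancel_right] at e1 e2
  obtain ⟨haa, hbb⟩ := divisor_exclusion hT ha ha' hb hb' (e1.trans e2.symm)
  have hmm' : (∏ ι, p ι ^ α ι) = ∏ ι, p ι ^ α' ι := by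
    rw [← h1, ← h3, haa]
  have hαα' : ∀ ι, α ι = α' ι := by
    intro ι
    have hcg := congrArg (fun N => N.factorization (p ι)) hmm'
    simpa only [fact_prod_pow hp hdist] using hcg
  have hαn : ∀ ι, α ι = n ι := by
    intro ι
    rcases hcond ι with h | h
    · exact absurd (hαα' ι) h
    · exact h.1
  rcases hne with h | h
  · exact h (by rw [hm, hM]; exact Finset.prod_congr rfl fun ι _ => by rw [hαn ι])
  · exact h (by
      rw [hm', hM]
      exact Finset.prod_congr rfl fun ι _ => by rw [← hαα' ι, hαn ι])
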